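/- Let Θ₃(r) denote the set of tensors A ∈ R^{d₁×d₂×d₃} whose Tucker ranks (ranks of the three matricizations) are each at most r. Define the approximate projection P̂_{Θ₃(r₂)}(Z) by successively applying best rank-r₂ approximation to the mode-1, mode-2, and mode-3 matricizations. Then for r₁ < r₂ < r₀, any Z ∈ Θ₃(r₀), and any Y ∈ Θ₃(r₁): ‖P̂_{Θ₃(r₂)}(Z) − Z‖_F ≤ (3β + 3β² + β³)·‖Y − Z‖_F, where β = sqrt((r₀−r₂)/(r₀−r₁)). -/

import Mathlib

set_option linter.unusedSectionVars false
set_option maxHeartbeats 1000000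
/-- Frobenius norm of a real matrix. -/
noncomputable def frobM {m n : Type*} [Fintype m] [Fintype n] (M : Matrix m n ℝ) : ℝ :=
  Real.sqrt (∑ i, ∑ j, (M i j) ^ 2)

/-- Frobenius norm of an order-3 tensor. -/
noncomputable def frobT {d₁ d₂ d₃ : ℕ} (A : Fin d₁ → Fin d₂ → Fin d₃ → ℝ) : ℝ :=
  Real.sqrt (∑ i, ∑ j, ∑ k, (A i j k) ^ 2)

/-- Mode-1 matricization. -/
def mat1 {d₁ d₂ d₃ : ℕ} (A : Fin d₁ → Fin d₂ → Fin d₃ → ℝ) :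
    Matrix (Fin d₁) (Fin d₂ × Fin d₃) ℝ :=
  Matrix.of fun i p => A i p.1 p.2

/-- Mode-2 matricization. -/
def mat2 {d₁ d₂ d₃ : ℕ} (A : Fin d₁ → Fin d₂ → Fin d₃ → ℝ) :
    Matrix (Fin d₂) (Fin d₁ × Fin d₃) ℝ :=
  Matrix.of fun j p => A p.1 j p.2

/-- Mode-3 matricization. -/
def mat3 {d₁ d₂ d₃ : ℕ} (A : Fin d₁ → Fin d₂ → Fin d₃ → ℝ) :
    Matrix (Fin d₃) (Fin d₁ × Fin d₂) ℝ :=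
  Matrix.of fun k p => A p.1 p.2 k

/-- Membership in Θ₃(r): all three Tucker ranks at most `r`. -/
def memTheta3 {d₁ d₂ d₃ : ℕ} (A : Fin d₁ → Fin d₂ → Fin d₃ → ℝ) (r : ℕ) : Prop :=
  (mat1 A).rank ≤ r ∧ (mat2 A).rank ≤ r ∧ (mat3 A).rank ≤ r

open scoped RealInnerProductSpace
open Matrix
namespace Aux
variable {m n : Type*} [Fintype m] [Fintype n]

def toE (x : n → ℝ) : EuclideanSpace ℝ n := WithLp.toLp 2 x
def ofE (x : EuclideanSpace ℝ n) : n → ℝ := WithLp.ofLp x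

@[simp] lemma ofE_toE (x : n → ℝ) : ofE (toE x) = x := rfl
@[simp] lemma toE_ofE (x : EuclideanSpace ℝ n) : toE (ofE x) = x := rfl

/-- sum of squares of a vector -/
def sqv (x : n → ℝ) : ℝ := ∑ j, x j ^ 2

def sqM (M : Matrix m n ℝ) : ℝ := ∑ i, ∑ j, M i j ^ 2

lemma sqv_nonneg (x : n → ℝ) : 0 ≤ sqv x := Finset.sum_nonneg fun _ _ => sq_nonneg _

lemma sqM_nonneg (M : Matrix m n ℝ) : 0 ≤ sqM M :=
  Finset.sum_nonneg fun _ _ => Finset.sum_nonneg fun _ _ => sq_nonneg _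

lemma frobM_eq (M : Matrix m n ℝ) : frobM M = Real.sqrt (sqM M) := rfl

lemma frobM_nonneg (M : Matrix m n ℝ) : 0 ≤ frobM M := Real.sqrt_nonneg _

lemma sq_frobM (M : Matrix m n ℝ) : frobM M ^ 2 = sqM M := Real.sq_sqrt (sqM_nonneg M)

lemma sqv_eq_dot (x : n → ℝ) : sqv x = x ⬝ᵥ x := by
  simp [sqv, dotProduct, pow_two]

lemma sqM_eq_sum_rows (M : Matrix m n ℝ) : sqM M = ∑ a, sqv (M a) := rfl

lemma sqM_eq_sum_cols (M : Matrix m n ℝ) : sqM M = ∑ j, sqv (fun a => M a j) := by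
  rw [sqM, Finset.sum_comm]; rfl

/-- inner product on EuclideanSpace is dotProduct -/
lemma inner_eq_dot (x y : EuclideanSpace ℝ n) : ⟪x, y⟫ = ofE x ⬝ᵥ ofE y := by
  simp [PiLp.inner_apply, dotProduct, RCLike.inner_apply, mul_comm]; rfl

lemma mulVec_apply_eq_inner (M : Matrix m n ℝ) (x : EuclideanSpace ℝ n) (a : m) :
    (M *ᵥ ofE x) a = ⟪toE (M a), x⟫ := by
  rw [inner_eq_dot]; rfl

lemma norm_sq_eq_sqv (x : EuclideanSpace ℝ n) : ‖x‖ ^ 2 = sqv (ofE x) := by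
  rw [← real_inner_self_eq_norm_sq, inner_eq_dot, sqv_eq_dot]

/-- Parseval for Frobenius: sum over an orthonormal basis of the squared images. -/
lemma sqM_eq_sum_basis {ι : Type*} [Fintype ι] (b : OrthonormalBasis ι ℝ (EuclideanSpace ℝ n))
    (M : Matrix m n ℝ) : sqM M = ∑ i, sqv (M *ᵥ ofE (b i)) := by
  have h : ∀ a : m, ∑ i, (M *ᵥ ofE (b i)) a ^ 2 = sqv (M a) := by
    intro a
    have hsum := b.sum_inner_mul_inner (𝕜 := ℝ) (toE (M a)) (toE (M a))
    calc ∑ i, (M *ᵥ ofE (b i)) a ^ 2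
        = ∑ i, ⟪toE (M a), b i⟫ * ⟪b i, toE (M a)⟫ := by
          refine Finset.sum_congr rfl fun i _ => ?_
          rw [mulVec_apply_eq_inner, real_inner_comm (toE (M a)) (b i), pow_two]
      _ = ⟪toE (M a), toE (M a)⟫ := hsum
      _ = sqv (M a) := by rw [inner_eq_dot, sqv_eq_dot]; rfl
  calc sqM M = ∑ a, sqv (M a) := rfl
    _ = ∑ a, ∑ i, (M *ᵥ ofE (b i)) a ^ 2 := by
          refine Finset.sum_congr rfl fun a _ => (h a).symm
    _ = ∑ i, ∑ a, (M *ᵥ ofE (b i)) a ^ 2 := Finset.sum_comm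
    _ = ∑ i, sqv (M *ᵥ ofE (b i)) := rfl

/-- Bessel for Frobenius. -/
lemma sum_sqv_le_sqM {ι : Type*} [Fintype ι] {v : ι → EuclideanSpace ℝ n}
    (hv : Orthonormal ℝ v) (M : Matrix m n ℝ) :
    ∑ i, sqv (M *ᵥ ofE (v i)) ≤ sqM M := by
  have h : ∀ a : m, ∑ i, (M *ᵥ ofE (v i)) a ^ 2 ≤ sqv (M a) := by
    intro a
    have hb := hv.sum_inner_products_le (𝕜 := ℝ) (s := Finset.univ) (toE (M a))
    calc ∑ i, (M *ᵥ ofE (v i)) a ^ 2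
        = ∑ i, ‖⟪v i, toE (M a)⟫‖ ^ 2 := by
          refine Finset.sum_congr rfl fun i _ => ?_
          rw [mulVec_apply_eq_inner, real_inner_comm, Real.norm_eq_abs, sq_abs]
      _ ≤ ‖toE (M a)‖ ^ 2 := hb
      _ = sqv (M a) := norm_sq_eq_sqv _
  calc ∑ i, sqv (M *ᵥ ofE (v i)) = ∑ i, ∑ a, (M *ᵥ ofE (v i)) a ^ 2 := rfl
    _ = ∑ a, ∑ i, (M *ᵥ ofE (v i)) a ^ 2 := Finset.sum_comm
    _ ≤ ∑ a, sqv (M a) := Finset.sum_le_sum fun a _ => h a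
    _ = sqM M := rfl


lemma orth_self {ι : Type*} {v : ι → EuclideanSpace ℝ n} (hv : Orthonormal ℝ v) (i : ι) :
    ⟪v i, v i⟫ = (1:ℝ) := by
  rw [real_inner_self_eq_norm_sq, hv.1 i]; norm_num

lemma orth_ne {ι : Type*} {v : ι → EuclideanSpace ℝ n} (hv : Orthonormal ℝ v) {i j : ι}
    (h : i ≠ j) : ⟪v i, v j⟫ = (0:ℝ) := hv.2 h

/-- projection-like matrix built from a finite family of vectors -/
def Pmat {ι : Type*} [Fintype ι] (v : ι → EuclideanSpace ℝ n) : Matrix n n ℝ :=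
  Matrix.of fun a c => ∑ i, ofE (v i) a * ofE (v i) c

lemma Pmat_mulVec {ι : Type*} [Fintype ι] (v : ι → EuclideanSpace ℝ n)
    (x : EuclideanSpace ℝ n) (a : n) :
    (Pmat v *ᵥ ofE x) a = ∑ i, ⟪v i, x⟫ * ofE (v i) a := by
  simp only [Pmat, mulVec, dotProduct, Matrix.of_apply, Finset.sum_mul]
  rw [Finset.sum_comm]
  refine Finset.sum_congr rfl fun i _ => ?_
  rw [inner_eq_dot]
  simp only [dotProduct, Finset.sum_mul]
  exact Finset.sum_congr rfl fun c _ => by ring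

lemma Pmat_rank_le {ι : Type*} [Fintype ι] (v : ι → EuclideanSpace ℝ n) :
    (Pmat v).rank ≤ Fintype.card ι := by
  have h : Pmat v = (Matrix.of fun a (i : ι) => ofE (v i) a) *
      (Matrix.of fun (i : ι) c => ofE (v i) c) := by
    ext a c
    simp [Matrix.mul_apply, Pmat]
  rw [h]
  exact (Matrix.rank_mul_le_left _ _).trans (Matrix.rank_le_card_width _)

lemma dot_Pmat_mulVec {ι : Type*} [Fintype ι] {v : ι → EuclideanSpace ℝ n}
    (hv : Orthonormal ℝ v) (x : EuclideanSpace ℝ n) (i : ι) :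
    ofE (v i) ⬝ᵥ (Pmat v *ᵥ ofE x) = ⟪v i, x⟫ := by
  calc ofE (v i) ⬝ᵥ (Pmat v *ᵥ ofE x)
      = ∑ a, ofE (v i) a * ∑ j, ⟪v j, x⟫ * ofE (v j) a := by
        refine Finset.sum_congr rfl fun a _ => ?_
        rw [Pmat_mulVec]
    _ = ∑ j, ⟪v j, x⟫ * (ofE (v i) ⬝ᵥ ofE (v j)) := by
        simp only [Finset.mul_sum, dotProduct]
        rw [Finset.sum_comm]
        refine Finset.sum_congr rfl fun j _ => ?_
        exact Finset.sum_congr rfl fun a _ => by ring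
    _ = ∑ j, ⟪v j, x⟫ * ⟪v i, v j⟫ := by
        refine Finset.sum_congr rfl fun j _ => by rw [inner_eq_dot (v i) (v j)]
    _ = ⟪v i, x⟫ := by
        rw [Finset.sum_eq_single i]
        · rw [orth_self hv i, mul_one]
        · intro j _ hj
          rw [orth_ne hv (Ne.symm hj), mul_zero]
        · simp

lemma Pmat_fix {ι : Type*} [Fintype ι] {v : ι → EuclideanSpace ℝ n}
    (hv : Orthonormal ℝ v) (i : ι) : Pmat v *ᵥ ofE (v i) = ofE (v i) := by
  funext a
  rw [Pmat_mulVec, Finset.sum_eq_single i]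
  · rw [orth_self hv i, one_mul]
  · intro j _ hj
    rw [orth_ne hv hj, zero_mul]
  · simp

lemma Pmat_perp {ι : Type*} [Fintype ι] {v : ι → EuclideanSpace ℝ n}
    (hv : Orthonormal ℝ v) (x : EuclideanSpace ℝ n) (i : ι) :
    ofE (v i) ⬝ᵥ (ofE x - Pmat v *ᵥ ofE x) = 0 := by
  rw [dotProduct_sub, dot_Pmat_mulVec hv, inner_eq_dot, sub_self]

/-- sum of the `k` smallest values of a monotone nonneg `ν` lower-bounds weighted sums
with `[0,1]`-weights summing to `k`. -/
lemma exchange {N k : ℕ} (ν : Fin N → ℝ) (hm : Monotone ν) (hnn : ∀ i, 0 ≤ ν i)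
    (s : Fin N → ℝ) (hs0 : ∀ i, 0 ≤ s i) (hs1 : ∀ i, s i ≤ 1)
    (hsum : ∑ i, s i = (k : ℝ)) :
    ∑ i ∈ Finset.univ.filter (fun i : Fin N => (i : ℕ) < k), ν i ≤ ∑ i, ν i * s i := by
  by_cases hk : k < N
  · set lam := ν ⟨k, hk⟩ with hlam
    have hcard : (Finset.univ.filter (fun i : Fin N => (i : ℕ) < k)).card = k := by
      have h1 : Finset.univ.filter (fun i : Fin N => (i : ℕ) < k)
          = (Finset.range k).attachFin (fun m hm => lt_trans (Finset.mem_range.mp hm) hk) := by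
        ext a; simp [Finset.mem_attachFin]
      rw [h1, Finset.card_attachFin, Finset.card_range]
    have key : ∀ i : Fin N, lam * s i - (if (i : ℕ) < k then lam else 0)
        ≤ ν i * s i - (if (i : ℕ) < k then ν i else 0) := by
      intro i
      by_cases hi : (i : ℕ) < k
      · simp only [if_pos hi]
        have h1 : ν i ≤ lam := hm (by simp [Fin.le_def]; omega)
        nlinarith [hs1 i]
      · simp only [if_neg hi]
        have h1 : lam ≤ ν i := hm (by simp [Fin.le_def]; omega)
        nlinarith [hs0 i]
    have hsumkey := Finset.sum_le_sum (fun i (_ : i ∈ Finset.univ) => key i)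
    have e1 : ∑ i : Fin N, (lam * s i - (if (i : ℕ) < k then lam else 0)) = 0 := by
      rw [Finset.sum_sub_distrib, ← Finset.mul_sum, hsum, ← Finset.sum_filter]
      simp [hcard, mul_comm]
    have e2 : ∑ i : Fin N, (ν i * s i - (if (i : ℕ) < k then ν i else 0))
        = ∑ i, ν i * s i - ∑ i ∈ Finset.univ.filter (fun i : Fin N => (i : ℕ) < k), ν i := by
      rw [Finset.sum_sub_distrib, ← Finset.sum_filter]
    rw [e1, e2] at hsumkey
    linarith
  · -- k ≥ N : all weights are 1
    push_neg at hk
    have hsle : (k : ℝ) ≤ (N : ℝ) := by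
      rw [← hsum]
      calc ∑ i, s i ≤ ∑ _i : Fin N, (1 : ℝ) := Finset.sum_le_sum fun i _ => hs1 i
        _ = (N : ℝ) := by simp
    have hkN : k = N := le_antisymm (by exact_mod_cast hsle) hk
    have hall : ∀ i, s i = 1 := by
      have hz : ∑ i : Fin N, (1 - s i) = 0 := by
        rw [Finset.sum_sub_distrib, hsum, hkN]; simp
      intro i
      have := (Finset.sum_eq_zero_iff_of_nonneg (fun j _ => by linarith [hs1 j])).mp hz i
        (Finset.mem_univ i)
      linarith
    calc ∑ i ∈ Finset.univ.filter (fun i : Fin N => (i : ℕ) < k), ν i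
        ≤ ∑ i, ν i := Finset.sum_le_sum_of_subset_of_nonneg (Finset.filter_subset _ _)
          (fun i _ _ => hnn i)
      _ = ∑ i, ν i * s i := Finset.sum_congr rfl fun i _ => by rw [hall i, mul_one]

def tailN {N : ℕ} (ν : Fin N → ℝ) (r : ℕ) : ℝ :=
  ∑ i ∈ Finset.univ.filter (fun i : Fin N => (i : ℕ) + r < N), ν i

lemma tailN_nonneg {N : ℕ} {ν : Fin N → ℝ} (hnn : ∀ i, 0 ≤ ν i) (r : ℕ) : 0 ≤ tailN ν r :=
  Finset.sum_nonneg fun i _ => hnn i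

lemma tailN_le_head {N k r : ℕ} {ν : Fin N → ℝ} (hnn : ∀ i, 0 ≤ ν i) (hk : N ≤ k + r) :
    tailN ν r ≤ ∑ i ∈ Finset.univ.filter (fun i : Fin N => (i : ℕ) < k), ν i := by
  refine Finset.sum_le_sum_of_subset_of_nonneg ?_ (fun i _ _ => hnn i)
  intro i hi
  simp only [Finset.mem_filter, Finset.mem_univ, true_and] at hi ⊢
  omega

/-- key ratio bound on tails of a monotone nonneg sequence with few nonzeros -/
lemma tail_ratio {N r₀ r₁ r₂ : ℕ} {ν : Fin N → ℝ} (hm : Monotone ν) (hnn : ∀ i, 0 ≤ ν i)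
    (hcard : (Finset.univ.filter (fun i : Fin N => ν i ≠ 0)).card ≤ r₀)
    (h12 : r₁ < r₂) (h20 : r₂ < r₀) :
    ((r₀ - r₁ : ℕ) : ℝ) * tailN ν r₂ ≤ ((r₀ - r₂ : ℕ) : ℝ) * tailN ν r₁ := by
  have zero_low : ∀ i : Fin N, (i : ℕ) + r₀ < N → ν i = 0 := by
    intro i hi
    by_contra hne
    have hpos : 0 < ν i := lt_of_le_of_ne (hnn i) (Ne.symm hne)
    have hsub : Finset.Ici i ⊆ Finset.univ.filter (fun j : Fin N => ν j ≠ 0) := by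
      intro j hj
      simp only [Finset.mem_Ici] at hj
      simp only [Finset.mem_filter, Finset.mem_univ, true_and]
      have := hm hj
      intro h0; rw [h0] at this; linarith
    have := (Finset.card_le_card hsub).trans hcard
    rw [Fin.card_Ici] at this
    omega
  by_cases hr2 : N ≤ r₂
  · have ht2 : tailN ν r₂ = 0 := by
      rw [tailN]
      refine Finset.sum_eq_zero fun i hi => ?_
      simp only [Finset.mem_filter, Finset.mem_univ, true_and] at hi
      omega
    rw [ht2, mul_zero]
    exact mul_nonneg (by positivity) (tailN_nonneg hnn r₁)
  · push_neg at hr2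
    set c := ν ⟨N - r₂, by omega⟩ with hc
    have hc0 : 0 ≤ c := hnn _
    -- claim 1 : tailN ν r₂ ≤ (r₀ - r₂) * c
    have claim1 : tailN ν r₂ ≤ ((r₀ - r₂ : ℕ) : ℝ) * c := by
      rw [tailN, ← Finset.sum_filter_add_sum_filter_not
        (Finset.univ.filter (fun i : Fin N => (i : ℕ) + r₂ < N))
        (fun i : Fin N => (i : ℕ) + r₀ < N)]
      have e1 : ∑ i ∈ (Finset.univ.filter (fun i : Fin N => (i : ℕ) + r₂ < N)).filter
          (fun i : Fin N => (i : ℕ) + r₀ < N), ν i = 0 := by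
        refine Finset.sum_eq_zero fun i hi => ?_
        simp only [Finset.mem_filter] at hi
        exact zero_low i hi.2
      rw [e1, zero_add]
      set F := (Finset.univ.filter (fun i : Fin N => (i : ℕ) + r₂ < N)).filter
          (fun i : Fin N => ¬ ((i : ℕ) + r₀ < N)) with hF
      have hFle : ∀ i ∈ F, ν i ≤ c := by
        intro i hi
        simp only [hF, Finset.mem_filter, Finset.mem_univ, true_and] at hi
        exact hm (by simp [Fin.le_def]; omega)
      have hFcard : F.card ≤ r₀ - r₂ := by
        have : F.card ≤ (Finset.Ico (N - r₀) (N - r₂)).card := by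
          refine Finset.card_le_card_of_injOn (fun i => (i : ℕ)) ?_ ?_
          · intro i hi
            simp only [hF, Finset.mem_coe, Finset.mem_filter, Finset.mem_univ, true_and] at hi
            simp only [Finset.mem_coe, Finset.mem_Ico]
            omega
          · exact Function.Injective.injOn Fin.val_injective
        rw [Nat.card_Ico] at this
        omega
      calc ∑ i ∈ F, ν i ≤ ∑ _i ∈ F, c := Finset.sum_le_sum hFle
        _ = F.card * c := by rw [Finset.sum_const, nsmul_eq_mul]
        _ ≤ ((r₀ - r₂ : ℕ) : ℝ) * c := by
            apply mul_le_mul_of_nonneg_right _ hc0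
            exact_mod_cast hFcard
    -- claim 2 : tailN ν r₂ + (r₂ - r₁) * c ≤ tailN ν r₁
    have claim2 : tailN ν r₂ + ((r₂ - r₁ : ℕ) : ℝ) * c ≤ tailN ν r₁ := by
      have hsplit := Finset.sum_filter_add_sum_filter_not
        (Finset.univ.filter (fun i : Fin N => (i : ℕ) + r₁ < N))
        (fun i : Fin N => (i : ℕ) + r₂ < N) ν
      have e1 : (Finset.univ.filter (fun i : Fin N => (i : ℕ) + r₁ < N)).filter
          (fun i : Fin N => (i : ℕ) + r₂ < N)
          = Finset.univ.filter (fun i : Fin N => (i : ℕ) + r₂ < N) := by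
        ext i; simp only [Finset.mem_filter, Finset.mem_univ, true_and]; omega
      rw [e1] at hsplit
      set D := (Finset.univ.filter (fun i : Fin N => (i : ℕ) + r₁ < N)).filter
          (fun i : Fin N => ¬ ((i : ℕ) + r₂ < N)) with hD
      have hDge : ∀ i ∈ D, c ≤ ν i := by
        intro i hi
        simp only [hD, Finset.mem_filter, Finset.mem_univ, true_and] at hi
        exact hm (by simp [Fin.le_def]; omega)
      have hDcard : r₂ - r₁ ≤ D.card := by
        have h := Finset.card_le_card_of_injOn
          (f := fun t : ℕ => (⟨t % N, Nat.mod_lt _ (by omega)⟩ : Fin N))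
          (s := Finset.Ico (N - r₂) (N - r₁)) (t := D) ?_ ?_
        · rw [Nat.card_Ico] at h; omega
        · intro t ht
          simp only [Finset.mem_coe, Finset.mem_Ico] at ht
          have htN : t < N := by omega
          simp only [hD, Finset.mem_coe, Finset.mem_filter, Finset.mem_univ, true_and, Nat.mod_eq_of_lt htN]
          omega
        · intro t ht u hu huv
          simp only [Finset.mem_Ico, Finset.mem_coe] at ht hu
          have h1 : t < N := by omega
          have h2 : u < N := by omega
          simpa [Fin.mk.injEq, Nat.mod_eq_of_lt h1, Nat.mod_eq_of_lt h2] using huv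
      have : ((r₂ - r₁ : ℕ) : ℝ) * c ≤ ∑ i ∈ D, ν i := by
        calc ((r₂ - r₁ : ℕ) : ℝ) * c ≤ (D.card : ℝ) * c := by
              apply mul_le_mul_of_nonneg_right _ hc0
              exact_mod_cast hDcard
          _ = ∑ _i ∈ D, c := by rw [Finset.sum_const, nsmul_eq_mul]
          _ ≤ ∑ i ∈ D, ν i := Finset.sum_le_sum hDge
      have ht2 : tailN ν r₂ = ∑ i ∈ Finset.univ.filter (fun i : Fin N => (i : ℕ) + r₂ < N), ν i :=
        rfl
      have ht1 : tailN ν r₁ = ∑ i ∈ Finset.univ.filter (fun i : Fin N => (i : ℕ) + r₁ < N), ν i :=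
        rfl
      rw [hD] at hsplit this
      rw [ht1, ht2]
      linarith
    -- combine
    have hsplit : ((r₀ - r₁ : ℕ) : ℝ) = ((r₀ - r₂ : ℕ) : ℝ) + ((r₂ - r₁ : ℕ) : ℝ) := by
      have : (r₀ - r₁ : ℕ) = (r₀ - r₂ : ℕ) + (r₂ - r₁ : ℕ) := by omega
      exact_mod_cast this
    have h02 : (0 : ℝ) ≤ ((r₀ - r₂ : ℕ) : ℝ) := by positivity
    have h21 : (0 : ℝ) ≤ ((r₂ - r₁ : ℕ) : ℝ) := by positivity
    have ht2nn : 0 ≤ tailN ν r₂ := tailN_nonneg hnn r₂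
    nlinarith [claim1, claim2]


section Eigen
variable [DecidableEq n]

lemma dot_gram (A : Matrix m n ℝ) (x y : n → ℝ) :
    (A *ᵥ x) ⬝ᵥ (A *ᵥ y) = x ⬝ᵥ ((Aᴴ * A) *ᵥ y) := by
  rw [Matrix.conjTranspose_eq_transpose_of_trivial, ← Matrix.mulVec_mulVec,
    Matrix.dotProduct_mulVec x Aᵀ, Matrix.vecMul_transpose]

noncomputable def eb (A : Matrix m n ℝ) : OrthonormalBasis n ℝ (EuclideanSpace ℝ n) :=
  (Matrix.isHermitian_conjTranspose_mul_self A).eigenvectorBasis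

noncomputable def ev (A : Matrix m n ℝ) : n → ℝ :=
  (Matrix.isHermitian_conjTranspose_mul_self A).eigenvalues

lemma ev_nonneg (A : Matrix m n ℝ) (j : n) : 0 ≤ ev A j :=
  Matrix.eigenvalues_conjTranspose_mul_self_nonneg A j

lemma gram_mulVec_eb (A : Matrix m n ℝ) (j : n) :
    (Aᴴ * A) *ᵥ ofE (eb A j) = ev A j • ofE (eb A j) :=
  (Matrix.isHermitian_conjTranspose_mul_self A).mulVec_eigenvectorBasis j

lemma sqv_mulVec_eb (A : Matrix m n ℝ) (j : n) : sqv (A *ᵥ ofE (eb A j)) = ev A j := by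
  rw [sqv_eq_dot, dot_gram, gram_mulVec_eb, dotProduct_smul]
  have h1 : ofE (eb A j) ⬝ᵥ ofE (eb A j) = 1 := by
    rw [← inner_eq_dot]; exact orth_self (eb A).orthonormal j
  rw [h1]; simp

lemma cross_mulVec_eb (A : Matrix m n ℝ) {i j : n} (h : i ≠ j) :
    (A *ᵥ ofE (eb A i)) ⬝ᵥ (A *ᵥ ofE (eb A j)) = 0 := by
  rw [dot_gram, gram_mulVec_eb, dotProduct_smul]
  have h1 : ofE (eb A i) ⬝ᵥ ofE (eb A j) = 0 := by
    rw [← inner_eq_dot]; exact orth_ne (eb A).orthonormal h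
  rw [h1]; simp

lemma ofE_expand (A : Matrix m n ℝ) (x : EuclideanSpace ℝ n) (c : n) :
    ofE x c = ∑ j, ⟪eb A j, x⟫ * ofE (eb A j) c := by
  have h0 : ofE x = ∑ j, ⟪eb A j, x⟫ • ofE (eb A j) := by
    calc ofE x = ofE (∑ j, ⟪eb A j, x⟫ • eb A j) := by rw [(eb A).sum_repr' x]
      _ = ∑ j, ofE (⟪eb A j, x⟫ • eb A j) :=
          map_sum (WithLp.linearEquiv 2 ℝ (n → ℝ)) _ _
      _ = ∑ j, ⟪eb A j, x⟫ • ofE (eb A j) := rfl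
  rw [h0]
  simp [Finset.sum_apply]

lemma gram_expansion (A : Matrix m n ℝ) (x : EuclideanSpace ℝ n) :
    sqv (A *ᵥ ofE x) = ∑ j, ev A j * ⟪eb A j, x⟫ ^ 2 := by
  set c : n → ℝ := fun j => ⟪eb A j, x⟫ with hc
  set y : n → m → ℝ := fun j => A *ᵥ ofE (eb A j) with hy
  have hz : ∀ a, (A *ᵥ ofE x) a = ∑ j, c j * y j a := by
    intro a
    simp only [mulVec, dotProduct, hy]
    calc ∑ t, A a t * ofE x t = ∑ t, ∑ j, A a t * (c j * ofE (eb A j) t) := by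
          refine Finset.sum_congr rfl fun t _ => ?_
          rw [ofE_expand A x t, Finset.mul_sum]
      _ = ∑ j, ∑ t, A a t * (c j * ofE (eb A j) t) := Finset.sum_comm
      _ = ∑ j, c j * ∑ t, A a t * ofE (eb A j) t := by
          refine Finset.sum_congr rfl fun j _ => ?_
          rw [Finset.mul_sum]
          exact Finset.sum_congr rfl fun t _ => by ring
  calc sqv (A *ᵥ ofE x) = ∑ a, (∑ j, c j * y j a) * (∑ j', c j' * y j' a) := by
        rw [sqv]
        exact Finset.sum_congr rfl fun a _ => by rw [hz a, pow_two]
    _ = ∑ a, ∑ j, ∑ j', (c j * y j a) * (c j' * y j' a) := by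
        exact Finset.sum_congr rfl fun a _ => by rw [Finset.sum_mul_sum]
    _ = ∑ j, ∑ j', (c j * c j') * (y j ⬝ᵥ y j') := by
        rw [Finset.sum_comm]
        refine Finset.sum_congr rfl fun j _ => ?_
        rw [Finset.sum_comm]
        refine Finset.sum_congr rfl fun j' _ => ?_
        rw [dotProduct, Finset.mul_sum]
        exact Finset.sum_congr rfl fun a _ => by ring
    _ = ∑ j, ev A j * c j ^ 2 := by
        refine Finset.sum_congr rfl fun j _ => ?_
        rw [Finset.sum_eq_single j]
        · rw [← sqv_eq_dot, sqv_mulVec_eb]; ring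
        · intro j' _ hj'
          rw [cross_mulVec_eb A (Ne.symm hj'), mul_zero]
        · simp


end Eigen

lemma sum_inner_sq {ι : Type*} [Fintype ι] (b : OrthonormalBasis ι ℝ (EuclideanSpace ℝ n))
    (x : EuclideanSpace ℝ n) : ∑ j, ⟪b j, x⟫ ^ 2 = ‖x‖ ^ 2 := by
  have h := b.sum_inner_mul_inner x x
  calc ∑ j, ⟪b j, x⟫ ^ 2 = ∑ j, ⟪x, b j⟫ * ⟪b j, x⟫ := by
        refine Finset.sum_congr rfl fun j _ => ?_
        rw [pow_two, real_inner_comm x (b j)]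
    _ = ⟪x, x⟫ := h
    _ = ‖x‖ ^ 2 := real_inner_self_eq_norm_sq x

section Spectral
variable [DecidableEq n]

lemma card_ev_ne_le_rank (A : Matrix m n ℝ) :
    (Finset.univ.filter fun j => ev A j ≠ 0).card ≤ A.rank := by
  classical
  set S := Finset.univ.filter fun j => ev A j ≠ 0 with hS
  set w : {j // j ∈ S} → EuclideanSpace ℝ m :=
    fun j => toE ((Real.sqrt (ev A (j : n)))⁻¹ • (A *ᵥ ofE (eb A (j : n)))) with hw
  have hev_pos : ∀ j : {j // j ∈ S}, 0 < ev A (j : n) := by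
    intro j
    have h2 := (Finset.mem_filter.mp j.2).2
    exact lt_of_le_of_ne (ev_nonneg A (j : n)) (Ne.symm h2)
  have hof : ∀ i : {j // j ∈ S},
      ofE (w i) = (Real.sqrt (ev A (i : n)))⁻¹ • (A *ᵥ ofE (eb A (i : n))) := fun _ => rfl
  have hwdot : ∀ i j : {j // j ∈ S},
      ofE (w i) ⬝ᵥ ofE (w j) = if i = j then 1 else 0 := by
    intro i j
    rw [hof, hof, smul_dotProduct, dotProduct_smul]
    by_cases hij : i = j
    · subst hij
      rw [if_pos rfl, ← sqv_eq_dot, sqv_mulVec_eb]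
      have h1 : 0 < ev A (i : n) := hev_pos i
      have h2 : Real.sqrt (ev A (i : n)) * Real.sqrt (ev A (i : n)) = ev A (i : n) :=
        Real.mul_self_sqrt h1.le
      have h3 : Real.sqrt (ev A (i : n)) ≠ 0 := by positivity
      rw [smul_eq_mul, smul_eq_mul, ← mul_assoc, ← mul_inv, h2, inv_mul_cancel₀ h1.ne']
    · rw [if_neg hij]
      have hne : (i : n) ≠ (j : n) := fun h => hij (Subtype.ext h)
      rw [cross_mulVec_eb A hne]
      simp
  have hworth : Orthonormal ℝ w := by
    constructor
    · intro i
      have h2 : ‖w i‖ ^ 2 = 1 := by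
        rw [← real_inner_self_eq_norm_sq, inner_eq_dot, hwdot, if_pos rfl]
      nlinarith [norm_nonneg (w i)]
    · intro i j hij
      rw [inner_eq_dot, hwdot, if_neg hij]
  have hli : LinearIndependent ℝ w := hworth.linearIndependent
  have hofE : LinearIndependent ℝ (fun j => ofE (w j)) :=
    hli.map' (WithLp.linearEquiv 2 ℝ (m → ℝ)).toLinearMap (LinearEquiv.ker _)
  set R := LinearMap.range (Matrix.mulVecLin A) with hR
  have hmem : ∀ j : {j // j ∈ S}, ofE (w j) ∈ R := by
    intro j
    refine ⟨(Real.sqrt (ev A (j : n)))⁻¹ • ofE (eb A (j : n)), ?_⟩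
    rw [Matrix.mulVecLin_apply, Matrix.mulVec_smul]
    exact (hof j).symm
  set w' : {j // j ∈ S} → R := fun j => ⟨ofE (w j), hmem j⟩ with hw'
  have hli' : LinearIndependent ℝ w' := LinearIndependent.of_comp R.subtype hofE
  have hcard := hli'.fintype_card_le_finrank
  rw [Fintype.card_coe] at hcard
  exact hcard

lemma exists_best (A : Matrix m n ℝ) (S : Finset n) :
    ∃ M : Matrix m n ℝ, M.rank ≤ S.card ∧
      sqM (A - M) = ∑ j ∈ Finset.univ.filter (fun j => j ∉ S), ev A j := by
  classical
  set v : {j // j ∈ S} → EuclideanSpace ℝ n := fun j => eb A (j : n) with hv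
  have hvo : Orthonormal ℝ v := (eb A).orthonormal.comp _ Subtype.val_injective
  refine ⟨A * Pmat v, ?_, ?_⟩
  · refine (Matrix.rank_mul_le_right _ _).trans ((Pmat_rank_le v).trans ?_)
    rw [Fintype.card_coe]
  · rw [sqM_eq_sum_basis (eb A)]
    have hterm : ∀ j, sqv ((A - A * Pmat v) *ᵥ ofE (eb A j))
        = if j ∈ S then 0 else ev A j := by
      intro j
      rw [Matrix.sub_mulVec, ← Matrix.mulVec_mulVec]
      by_cases hj : j ∈ S
      · have h1 : Pmat v *ᵥ ofE (eb A j) = ofE (eb A j) := Pmat_fix hvo ⟨j, hj⟩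
        rw [h1, if_pos hj, sub_self]
        simp [sqv]
      · have hz : Pmat v *ᵥ ofE (eb A j) = 0 := by
          funext a
          rw [Pmat_mulVec]
          refine Finset.sum_eq_zero fun i _ => ?_
          have hne : ((i : n) : n) ≠ j := fun h => hj (h ▸ i.2)
          rw [orth_ne (eb A).orthonormal hne, zero_mul]
        rw [hz, Matrix.mulVec_zero, sub_zero, if_neg hj, sqv_mulVec_eb]
    rw [Finset.sum_congr rfl (fun j _ => hterm j), Finset.sum_filter]
    refine Finset.sum_congr rfl fun j _ => ?_
    by_cases h : j ∈ S <;> simp [h]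

lemma weights_exist (A B : Matrix m n ℝ) :
    ∃ (k : ℕ) (t : n → ℝ), (∀ j, 0 ≤ t j) ∧ (∀ j, t j ≤ 1) ∧ (∑ j, t j = (k : ℝ)) ∧
      Fintype.card n ≤ k + B.rank ∧ ∑ j, ev A j * t j ≤ sqM (A - B) := by
  classical
  set K := LinearMap.ker (Matrix.mulVecLin B) with hK
  set le2 := (WithLp.linearEquiv 2 ℝ (n → ℝ)).symm with hle2
  set K' : Submodule ℝ (EuclideanSpace ℝ n) := K.map le2.toLinearMap with hK'
  set k := Module.finrank ℝ K' with hkdef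
  set u := stdOrthonormalBasis ℝ K' with hu
  set U : Fin k → EuclideanSpace ℝ n := fun i => ((u i : K') : EuclideanSpace ℝ n) with hU
  have hUo : Orthonormal ℝ U := by
    constructor
    · intro i
      have h1 : ‖u i‖ = 1 := u.orthonormal.1 i
      show ‖((u i : K') : EuclideanSpace ℝ n)‖ = 1
      rwa [Submodule.coe_norm] at h1
    · intro i j hij
      have h1 : ⟪u i, u j⟫ = (0 : ℝ) := u.orthonormal.2 hij
      show ⟪((u i : K') : EuclideanSpace ℝ n), ((u j : K') : EuclideanSpace ℝ n)⟫ = (0 : ℝ)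
      rwa [Submodule.coe_inner] at h1
  have hkrank : Fintype.card n ≤ k + B.rank := by
    have h1 : Module.finrank ℝ K' = Module.finrank ℝ K := LinearEquiv.finrank_map_eq le2 K
    have h2 := LinearMap.finrank_range_add_finrank_ker (Matrix.mulVecLin B)
    have h3 : Module.finrank ℝ (n → ℝ) = Fintype.card n := Module.finrank_pi ℝ
    have h4 : B.rank = Module.finrank ℝ (LinearMap.range (Matrix.mulVecLin B)) := rfl
    have h5 : Module.finrank ℝ K = Module.finrank ℝ (LinearMap.ker (Matrix.mulVecLin B)) := rfl
    omega
  have hBU : ∀ i, B *ᵥ ofE (U i) = 0 := by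
    intro i
    have hm2 : (U i : EuclideanSpace ℝ n) ∈ K' := (u i).2
    rw [hK'] at hm2
    obtain ⟨y, hyK, hy⟩ := Submodule.mem_map.mp hm2
    have hofE : ofE (U i) = y := by rw [← hy]; rfl
    rw [hofE]
    have := hyK
    rw [hK, LinearMap.mem_ker, Matrix.mulVecLin_apply] at this
    exact this
  set t : n → ℝ := fun j => ∑ i, ⟪eb A j, U i⟫ ^ 2 with ht
  have htj : ∀ j, t j = ∑ i, ⟪eb A j, U i⟫ ^ 2 := fun _ => rfl
  have ht0 : ∀ j, 0 ≤ t j := fun j => Finset.sum_nonneg fun i _ => sq_nonneg _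
  have ht1 : ∀ j, t j ≤ 1 := by
    intro j
    have hb := hUo.sum_inner_products_le (𝕜 := ℝ) (s := Finset.univ) (eb A j)
    have heq : ∑ i, ⟪eb A j, U i⟫ ^ 2 = ∑ i, ‖⟪U i, eb A j⟫‖ ^ 2 := by
      refine Finset.sum_congr rfl fun i _ => ?_
      rw [real_inner_comm, Real.norm_eq_abs, sq_abs]
    have hnb : ‖eb A j‖ = 1 := (eb A).orthonormal.1 j
    rw [htj j, heq]
    calc ∑ i, ‖⟪U i, eb A j⟫‖ ^ 2 ≤ ‖eb A j‖ ^ 2 := hb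
      _ = 1 := by rw [hnb]; norm_num
  have hts : ∑ j, t j = (k : ℝ) := by
    have hinner : ∀ i, ∑ j, ⟪eb A j, U i⟫ ^ 2 = 1 := by
      intro i
      rw [sum_inner_sq (eb A) (U i), hUo.1 i]
      norm_num
    calc ∑ j, t j = ∑ j, ∑ i, ⟪eb A j, U i⟫ ^ 2 := Finset.sum_congr rfl fun j _ => htj j
      _ = ∑ i, ∑ j, ⟪eb A j, U i⟫ ^ 2 := Finset.sum_comm
      _ = ∑ i : Fin k, (1 : ℝ) := Finset.sum_congr rfl fun i _ => hinner i
      _ = (k : ℝ) := by simp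
  refine ⟨k, t, ht0, ht1, hts, hkrank, ?_⟩
  calc ∑ j, ev A j * t j = ∑ i, ∑ j, ev A j * ⟪eb A j, U i⟫ ^ 2 := by
        rw [Finset.sum_comm]
        refine Finset.sum_congr rfl fun j _ => ?_
        rw [htj j, Finset.mul_sum]
    _ = ∑ i, sqv ((A - B) *ᵥ ofE (U i)) := by
        refine Finset.sum_congr rfl fun i _ => ?_
        rw [Matrix.sub_mulVec, hBU i, sub_zero, gram_expansion]
    _ ≤ sqM (A - B) := sum_sqv_le_sqM hUo (A - B)

end Spectral

lemma sqv_add (x y : n → ℝ) : sqv (x + y) = sqv x + 2 * (x ⬝ᵥ y) + sqv y := by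
  simp only [sqv, Pi.add_apply, dotProduct, Finset.mul_sum, ← Finset.sum_add_distrib]
  exact Finset.sum_congr rfl fun j _ => by ring

lemma sqM_eq_zero {M : Matrix m n ℝ} (h : sqM M = 0) : M = 0 := by
  ext a j
  have h1 := (Finset.sum_eq_zero_iff_of_nonneg
    (fun i _ => Finset.sum_nonneg fun j _ => sq_nonneg (M i j))).mp h a (Finset.mem_univ a)
  have h2 := (Finset.sum_eq_zero_iff_of_nonneg
    (fun j _ => sq_nonneg (M a j))).mp h1 j (Finset.mem_univ j)
  have := sq_eq_zero_iff.mp h2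
  simpa using this

lemma frobM_le_frobM_iff {X Y : Matrix m n ℝ} : frobM X ≤ frobM Y ↔ sqM X ≤ sqM Y := by
  rw [frobM_eq, frobM_eq]
  constructor
  · intro h
    have h1 := Real.sq_sqrt (sqM_nonneg X)
    have h2 := Real.sq_sqrt (sqM_nonneg Y)
    nlinarith [Real.sqrt_nonneg (sqM X), Real.sqrt_nonneg (sqM Y)]
  · exact fun h => Real.sqrt_le_sqrt h

lemma orthonormal_coe {U : Submodule ℝ (EuclideanSpace ℝ n)} {ι : Type*} [Fintype ι]
    (u : OrthonormalBasis ι ℝ U) :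
    Orthonormal ℝ (fun i => ((u i : U) : EuclideanSpace ℝ n)) := by
  constructor
  · intro i
    have h1 : ‖u i‖ = 1 := u.orthonormal.1 i
    rwa [Submodule.coe_norm] at h1
  · intro i j hij
    have h1 : ⟪u i, u j⟫ = (0 : ℝ) := u.orthonormal.2 hij
    rwa [Submodule.coe_inner] at h1

lemma mem_expand {U : Submodule ℝ (EuclideanSpace ℝ n)} {ι : Type*} [Fintype ι]
    (u : OrthonormalBasis ι ℝ U) {x : EuclideanSpace ℝ n} (hx : x ∈ U) (c : n) :
    ofE x c = ∑ i, ⟪((u i : U) : EuclideanSpace ℝ n), x⟫ * ofE ((u i : U) : EuclideanSpace ℝ n) c := by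
  have h := u.sum_repr ⟨x, hx⟩
  have h2 := congrArg (fun z : U => ofE (z : EuclideanSpace ℝ n)) h
  simp only at h2
  have h3 : ofE ((↑(∑ i, u.repr ⟨x, hx⟩ i • u i) : EuclideanSpace ℝ n))
      = ∑ i, u.repr ⟨x, hx⟩ i • ofE ((u i : U) : EuclideanSpace ℝ n) := by
    rw [Submodule.coe_sum]
    calc ofE (∑ i, ((u.repr ⟨x, hx⟩ i • u i : U) : EuclideanSpace ℝ n))
        = ∑ i, ofE ((u.repr ⟨x, hx⟩ i • u i : U) : EuclideanSpace ℝ n) :=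
          map_sum (WithLp.linearEquiv 2 ℝ (n → ℝ)) _ _
      _ = ∑ i, u.repr ⟨x, hx⟩ i • ofE ((u i : U) : EuclideanSpace ℝ n) := rfl
  rw [h3] at h2
  have h4 : ∀ i, u.repr ⟨x, hx⟩ i = ⟪((u i : U) : EuclideanSpace ℝ n), x⟫ := by
    intro i
    rw [u.repr_apply_apply]
    exact (Submodule.coe_inner U (u i) ⟨x, hx⟩)
  calc ofE x c = (∑ i, u.repr ⟨x, hx⟩ i • ofE ((u i : U) : EuclideanSpace ℝ n)) c := by
        rw [h2]
    _ = ∑ i, u.repr ⟨x, hx⟩ i * ofE ((u i : U) : EuclideanSpace ℝ n) c := by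
        rw [Finset.sum_apply]; rfl
    _ = ∑ i, ⟪((u i : U) : EuclideanSpace ℝ n), x⟫ * ofE ((u i : U) : EuclideanSpace ℝ n) c := by
        exact Finset.sum_congr rfl fun i _ => by rw [h4 i]

section Core
variable [DecidableEq m] [DecidableEq n]

lemma minimizer_factor (r₂ : ℕ) (A W : Matrix m n ℝ) (hWr : W.rank ≤ r₂)
    (hW : ∀ M : Matrix m n ℝ, M.rank ≤ r₂ → frobM (A - W) ≤ frobM (A - M)) :
    ∃ P : Matrix m m ℝ, W = P * A := by
  classical
  set le2 := (WithLp.linearEquiv 2 ℝ (m → ℝ)).symm with hle2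
  set U : Submodule ℝ (EuclideanSpace ℝ m) :=
    (LinearMap.range (Matrix.mulVecLin W)).map le2.toLinearMap with hU
  have hUdim : Module.finrank ℝ U ≤ r₂ := by
    have h1 : Module.finrank ℝ U
        = Module.finrank ℝ (LinearMap.range (Matrix.mulVecLin W)) :=
      LinearEquiv.finrank_map_eq le2 _
    rw [h1]
    exact hWr
  set bU := stdOrthonormalBasis ℝ U with hbU
  set v : Fin (Module.finrank ℝ U) → EuclideanSpace ℝ m :=
    fun i => ((bU i : U) : EuclideanSpace ℝ m) with hv
  have hvo : Orthonormal ℝ v := orthonormal_coe bU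
  set P := Pmat v with hP
  have hrank : (P * A).rank ≤ r₂ := by
    refine (Matrix.rank_mul_le_left _ _).trans ((Pmat_rank_le v).trans ?_)
    simpa using hUdim
  -- columns
  have hcolmem : ∀ j, (toE (fun a => W a j)) ∈ U := by
    intro j
    refine ⟨W *ᵥ Pi.single j 1, ⟨Pi.single j 1, rfl⟩, ?_⟩
    show toE (W *ᵥ Pi.single j 1) = toE (fun a => W a j)
    congr 1
    funext a
    simp [Matrix.mulVec_single]
  -- P * A columns are P applied to columns of A
  have hPA : ∀ a j, (P * A) a j = (P *ᵥ ofE (toE (fun c => A c j))) a := by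
    intro a j
    simp [Matrix.mul_apply, Matrix.mulVec, dotProduct]
  -- Pythagoras per column
  have hpyth : sqM (A - W) = sqM (A - P * A) + sqM (P * A - W) := by
    rw [sqM_eq_sum_cols, sqM_eq_sum_cols (A - P * A), sqM_eq_sum_cols (P * A - W),
      ← Finset.sum_add_distrib]
    refine Finset.sum_congr rfl fun j _ => ?_
    set acol : EuclideanSpace ℝ m := toE (fun a => A a j) with hacol
    set wcol : EuclideanSpace ℝ m := toE (fun a => W a j) with hwcol
    set x : m → ℝ := ofE acol - P *ᵥ ofE acol with hx
    set y : m → ℝ := P *ᵥ ofE acol - ofE wcol with hy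
    have hcolsub : (fun a => (A - W) a j) = x + y := by
      funext a
      simp [hx, hy, Matrix.sub_apply]
      rfl
    have hcolsub2 : (fun a => (A - P * A) a j) = x := by
      funext a
      simp [hx, Matrix.sub_apply, hPA a j]
      rfl
    have hcolsub3 : (fun a => (P * A - W) a j) = y := by
      funext a
      simp [hy, Matrix.sub_apply, hPA a j]
      rfl
    have hxy : x ⬝ᵥ y = 0 := by
      -- y is a combination of the v i, x is orthogonal to each v i
      have hyrep : ∀ a, y a = ∑ i, (⟪v i, acol⟫ - ⟪v i, wcol⟫) * ofE (v i) a := by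
        intro a
        have h1 : (P *ᵥ ofE acol) a = ∑ i, ⟪v i, acol⟫ * ofE (v i) a := Pmat_mulVec v acol a
        have h2 : ofE wcol a = ∑ i, ⟪v i, wcol⟫ * ofE (v i) a := mem_expand bU (hcolmem j) a
        simp only [hy, Pi.sub_apply, h1, h2, ← Finset.sum_sub_distrib]
        exact Finset.sum_congr rfl fun i _ => by ring
      have hperp : ∀ i, ofE (v i) ⬝ᵥ x = 0 := fun i => Pmat_perp hvo acol i
      calc x ⬝ᵥ y = ∑ a, x a * ∑ i, (⟪v i, acol⟫ - ⟪v i, wcol⟫) * ofE (v i) a := by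
            refine Finset.sum_congr rfl fun a _ => by rw [hyrep a]
        _ = ∑ i, (⟪v i, acol⟫ - ⟪v i, wcol⟫) * (ofE (v i) ⬝ᵥ x) := by
            simp only [Finset.mul_sum, dotProduct]
            rw [Finset.sum_comm]
            refine Finset.sum_congr rfl fun i _ => ?_
            exact Finset.sum_congr rfl fun a _ => by ring
        _ = 0 := by
            refine Finset.sum_eq_zero fun i _ => ?_
            rw [hperp i, mul_zero]
    rw [hcolsub, hcolsub2, hcolsub3, sqv_add, hxy]
    ring
  -- minimality forces the middle term to vanish
  have hmin := (frobM_le_frobM_iff).mp (hW (P * A) hrank)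
  have hz : sqM (P * A - W) = 0 := le_antisymm (by linarith) (sqM_nonneg _)
  have := sqM_eq_zero hz
  exact ⟨P, (sub_eq_zero.mp this).symm⟩

end Core

section CoreContract
variable [DecidableEq n]

lemma core (r₀ r₁ r₂ : ℕ) (h12 : r₁ < r₂) (h20 : r₂ < r₀) (A B W : Matrix m n ℝ)
    (hA : A.rank ≤ r₀) (hB : B.rank ≤ r₁)
    (hW : ∀ M : Matrix m n ℝ, M.rank ≤ r₂ → frobM (A - W) ≤ frobM (A - M)) :
    frobM (A - W) ≤ Real.sqrt (((r₀ - r₂ : ℕ) : ℝ) / ((r₀ - r₁ : ℕ) : ℝ)) * frobM (A - B) := by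
  classical
  set N := Fintype.card n with hN
  set e : n ≃ Fin N := Fintype.equivFin n with he
  set g : Fin N ≃ n := (Tuple.sort (ev A ∘ e.symm)).trans e.symm with hg
  set ν : Fin N → ℝ := fun i => ev A (g i) with hν
  have hmono : Monotone ν := Tuple.monotone_sort (ev A ∘ e.symm)
  have hnn : ∀ i, 0 ≤ ν i := fun i => ev_nonneg A _
  have hcard : (Finset.univ.filter (fun i : Fin N => ν i ≠ 0)).card ≤ r₀ := by
    have h1 := card_ev_ne_le_rank A
    have h2 : (Finset.univ.filter fun i : Fin N => ν i ≠ 0).card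
        = (Finset.univ.filter fun j => ev A j ≠ 0).card := by
      refine Finset.card_bij (fun i _ => g i) ?_ ?_ ?_
      · intro i hi
        simp only [Finset.mem_filter, Finset.mem_univ, true_and] at hi ⊢
        exact hi
      · intro i1 h1 i2 h2 h
        exact g.injective h
      · intro j hj
        refine ⟨g.symm j, ?_, by simp⟩
        simp only [Finset.mem_filter, Finset.mem_univ, true_and] at hj ⊢
        rw [hν]
        simpa [Equiv.apply_symm_apply] using hj
    omega
  -- instantiate B1 with the top set
  set Sr : Finset n :=
    (Finset.univ.filter fun i : Fin N => ¬((i : ℕ) + r₂ < N)).map g.toEmbedding with hSr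
  have hSrcard : Sr.card ≤ r₂ := by
    rw [hSr, Finset.card_map]
    have h1 : (Finset.univ.filter fun i : Fin N => ¬((i : ℕ) + r₂ < N)).card
        ≤ (Finset.Ico (N - r₂) N).card := by
      refine Finset.card_le_card_of_injOn (fun i => (i : ℕ)) ?_
        (Function.Injective.injOn Fin.val_injective)
      intro i hi
      simp only [Finset.mem_coe, Finset.mem_filter, Finset.mem_univ, true_and] at hi
      simp only [Finset.mem_coe, Finset.mem_Ico]
      omega
    rw [Nat.card_Ico] at h1
    omega
  have hSsum : ∑ j ∈ Finset.univ.filter (fun j => j ∉ Sr), ev A j = tailN ν r₂ := by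
    have hset : Finset.univ.filter (fun j => j ∉ Sr)
        = (Finset.univ.filter fun i : Fin N => (i : ℕ) + r₂ < N).map g.toEmbedding := by
      ext j
      simp only [Finset.mem_filter, Finset.mem_univ, true_and, hSr, Finset.mem_map_equiv]
      tauto
    rw [hset, Finset.sum_map]
    exact Finset.sum_congr rfl fun i _ => rfl
  obtain ⟨Mb, hMbrank, hMbsq⟩ := exists_best A Sr
  -- instantiate B2
  obtain ⟨k, t, ht0, ht1, hts, hkr, hmain⟩ := weights_exist A B
  have hlow : tailN ν r₁ ≤ sqM (A - B) := by
    have hsumk : ∑ i, t (g i) = (k : ℝ) := by rw [Equiv.sum_comp g t]; exact hts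
    have hL := exchange ν hmono hnn (fun i => t (g i)) (fun i => ht0 _) (fun i => ht1 _) hsumk
    have hhead := tailN_le_head (r := r₁) (k := k) hnn (by omega)
    have hcomp : ∑ i, ν i * t (g i) = ∑ j, ev A j * t j :=
      Equiv.sum_comp g (fun j => ev A j * t j)
    rw [hcomp] at hL
    linarith
  -- tail ratio
  have hratio := tail_ratio hmono hnn hcard h12 h20
  -- minimality
  have hWb : sqM (A - W) ≤ tailN ν r₂ := by
    have h1 := (frobM_le_frobM_iff).mp (hW Mb (le_trans hMbrank hSrcard))
    rw [hMbsq, hSsum] at h1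
    exact h1
  -- combine
  have hden : (0 : ℝ) < ((r₀ - r₁ : ℕ) : ℝ) := by
    have : 0 < r₀ - r₁ := by omega
    exact_mod_cast this
  have hnum : (0 : ℝ) ≤ ((r₀ - r₂ : ℕ) : ℝ) := by positivity
  set ratio := ((r₀ - r₂ : ℕ) : ℝ) / ((r₀ - r₁ : ℕ) : ℝ) with hratiodef
  have hratio0 : 0 ≤ ratio := by positivity
  have hkey : sqM (A - W) ≤ ratio * sqM (A - B) := by
    have h1 : tailN ν r₂ ≤ ratio * tailN ν r₁ := by
      rw [hratiodef, div_mul_eq_mul_div, le_div_iff₀ hden, mul_comm (tailN ν r₂)]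
      exact hratio
    have h2 : ratio * tailN ν r₁ ≤ ratio * sqM (A - B) :=
      mul_le_mul_of_nonneg_left hlow hratio0
    linarith
  calc frobM (A - W) = Real.sqrt (sqM (A - W)) := frobM_eq _
    _ ≤ Real.sqrt (ratio * sqM (A - B)) := Real.sqrt_le_sqrt hkey
    _ = Real.sqrt ratio * Real.sqrt (sqM (A - B)) := Real.sqrt_mul hratio0 _
    _ = Real.sqrt ratio * frobM (A - B) := by rw [frobM_eq]

end CoreContract

section Tensor
variable {d₁ d₂ d₃ : ℕ}

def TtoE (X : Fin d₁ → Fin d₂ → Fin d₃ → ℝ) :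
    EuclideanSpace ℝ (Fin d₁ × Fin d₂ × Fin d₃) :=
  toE (fun p => X p.1 p.2.1 p.2.2)

lemma frobT_eq_norm (X : Fin d₁ → Fin d₂ → Fin d₃ → ℝ) : frobT X = ‖TtoE X‖ := by
  rw [EuclideanSpace.norm_eq, frobT]
  congr 1
  rw [Fintype.sum_prod_type]
  refine Finset.sum_congr rfl fun i _ => ?_
  rw [Fintype.sum_prod_type]
  refine Finset.sum_congr rfl fun j _ => Finset.sum_congr rfl fun k _ => ?_
  rw [Real.norm_eq_abs, sq_abs]
  rfl

lemma TtoE_sub (X Y : Fin d₁ → Fin d₂ → Fin d₃ → ℝ) : TtoE (X - Y) = TtoE X - TtoE Y := rfl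

lemma frobT_symm (X Y : Fin d₁ → Fin d₂ → Fin d₃ → ℝ) : frobT (X - Y) = frobT (Y - X) := by
  rw [frobT_eq_norm, frobT_eq_norm, TtoE_sub, TtoE_sub, norm_sub_rev]

lemma frobT_triangle (X Y Z : Fin d₁ → Fin d₂ → Fin d₃ → ℝ) :
    frobT (X - Z) ≤ frobT (X - Y) + frobT (Y - Z) := by
  rw [frobT_eq_norm, frobT_eq_norm, frobT_eq_norm, TtoE_sub, TtoE_sub, TtoE_sub]
  exact norm_sub_le_norm_sub_add_norm_sub _ _ _

lemma mat1_sub (X Y : Fin d₁ → Fin d₂ → Fin d₃ → ℝ) : mat1 (X - Y) = mat1 X - mat1 Y := rfl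
lemma mat2_sub (X Y : Fin d₁ → Fin d₂ → Fin d₃ → ℝ) : mat2 (X - Y) = mat2 X - mat2 Y := rfl
lemma mat3_sub (X Y : Fin d₁ → Fin d₂ → Fin d₃ → ℝ) : mat3 (X - Y) = mat3 X - mat3 Y := rfl

lemma frobT_eq_mat1 (X : Fin d₁ → Fin d₂ → Fin d₃ → ℝ) : frobT X = frobM (mat1 X) := by
  rw [frobT, frobM]
  congr 1
  refine Finset.sum_congr rfl fun i _ => ?_
  rw [Fintype.sum_prod_type]
  rfl

lemma frobT_eq_mat2 (X : Fin d₁ → Fin d₂ → Fin d₃ → ℝ) : frobT X = frobM (mat2 X) := by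
  rw [frobT, frobM]
  congr 1
  calc ∑ i, ∑ j, ∑ k, X i j k ^ 2 = ∑ j, ∑ i, ∑ k, X i j k ^ 2 := Finset.sum_comm
    _ = ∑ j, ∑ p : Fin d₁ × Fin d₃, (mat2 X) j p ^ 2 := by
        refine Finset.sum_congr rfl fun j _ => ?_
        rw [Fintype.sum_prod_type]
        rfl

lemma frobT_eq_mat3 (X : Fin d₁ → Fin d₂ → Fin d₃ → ℝ) : frobT X = frobM (mat3 X) := by
  rw [frobT, frobM]
  congr 1
  calc ∑ i, ∑ j, ∑ k, X i j k ^ 2 = ∑ i, ∑ k, ∑ j, X i j k ^ 2 :=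
        Finset.sum_congr rfl fun i _ => Finset.sum_comm
    _ = ∑ k, ∑ i, ∑ j, X i j k ^ 2 := Finset.sum_comm
    _ = ∑ k, ∑ p : Fin d₁ × Fin d₂, (mat3 X) k p ^ 2 := by
        refine Finset.sum_congr rfl fun k _ => ?_
        rw [Fintype.sum_prod_type]
        rfl

lemma rank_mat2_le {W Z : Fin d₁ → Fin d₂ → Fin d₃ → ℝ} (P : Matrix (Fin d₁) (Fin d₁) ℝ)
    (hfac : mat1 W = P * mat1 Z) : (mat2 W).rank ≤ (mat2 Z).rank := by
  have hent : ∀ i j k, W i j k = ∑ i', P i i' * Z i' j k := by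
    intro i j k
    have := congrFun (congrFun hfac i) (j, k)
    rw [Matrix.mul_apply] at this
    exact this
  have hfac2 : mat2 W = mat2 Z * (Matrix.of fun (q : Fin d₁ × Fin d₃) (p : Fin d₁ × Fin d₃) =>
      P p.1 q.1 * (if q.2 = p.2 then (1:ℝ) else 0)) := by
    ext j p
    rw [Matrix.mul_apply, Fintype.sum_prod_type]
    show W p.1 j p.2 = _
    rw [hent p.1 j p.2]
    refine Finset.sum_congr rfl fun i' _ => ?_
    rw [Finset.sum_eq_single p.2]
    · show P p.1 i' * Z i' j p.2 = Z i' j p.2 * (P p.1 i' * (if p.2 = p.2 then (1:ℝ) else 0))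
      simp [mul_comm]
    · intro k' _ hk'
      show Z i' j k' * (P p.1 i' * (if k' = p.2 then (1:ℝ) else 0)) = 0
      simp [hk']
    · simp
  rw [hfac2]
  exact Matrix.rank_mul_le_left _ _

lemma rank_mat3_le_of_mat1 {W Z : Fin d₁ → Fin d₂ → Fin d₃ → ℝ} (P : Matrix (Fin d₁) (Fin d₁) ℝ)
    (hfac : mat1 W = P * mat1 Z) : (mat3 W).rank ≤ (mat3 Z).rank := by
  have hent : ∀ i j k, W i j k = ∑ i', P i i' * Z i' j k := by
    intro i j k
    have := congrFun (congrFun hfac i) (j, k)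
    rw [Matrix.mul_apply] at this
    exact this
  have hfac2 : mat3 W = mat3 Z * (Matrix.of fun (q : Fin d₁ × Fin d₂) (p : Fin d₁ × Fin d₂) =>
      P p.1 q.1 * (if q.2 = p.2 then (1:ℝ) else 0)) := by
    ext k p
    rw [Matrix.mul_apply, Fintype.sum_prod_type]
    show W p.1 p.2 k = _
    rw [hent p.1 p.2 k]
    refine Finset.sum_congr rfl fun i' _ => ?_
    rw [Finset.sum_eq_single p.2]
    · show P p.1 i' * Z i' p.2 k = Z i' p.2 k * (P p.1 i' * (if p.2 = p.2 then (1:ℝ) else 0))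
      simp [mul_comm]
    · intro j' _ hj'
      show Z i' j' k * (P p.1 i' * (if j' = p.2 then (1:ℝ) else 0)) = 0
      simp [hj']
    · simp
  rw [hfac2]
  exact Matrix.rank_mul_le_left _ _

lemma rank_mat3_le_of_mat2 {W Z : Fin d₁ → Fin d₂ → Fin d₃ → ℝ} (Q : Matrix (Fin d₂) (Fin d₂) ℝ)
    (hfac : mat2 W = Q * mat2 Z) : (mat3 W).rank ≤ (mat3 Z).rank := by
  have hent : ∀ i j k, W i j k = ∑ j', Q j j' * Z i j' k := by
    intro i j k
    have := congrFun (congrFun hfac j) (i, k)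
    rw [Matrix.mul_apply] at this
    exact this
  have hfac2 : mat3 W = mat3 Z * (Matrix.of fun (q : Fin d₁ × Fin d₂) (p : Fin d₁ × Fin d₂) =>
      Q p.2 q.2 * (if q.1 = p.1 then (1:ℝ) else 0)) := by
    ext k p
    rw [Matrix.mul_apply, Fintype.sum_prod_type]
    show W p.1 p.2 k = _
    rw [hent p.1 p.2 k]
    rw [Finset.sum_comm]
    refine Finset.sum_congr rfl fun j' _ => ?_
    rw [Finset.sum_eq_single p.1]
    · show Q p.2 j' * Z p.1 j' k = Z p.1 j' k * (Q p.2 j' * (if p.1 = p.1 then (1:ℝ) else 0))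
      simp [mul_comm]
    · intro i' _ hi'
      show Z i' j' k * (Q p.2 j' * (if i' = p.1 then (1:ℝ) else 0)) = 0
      simp [hi']
    · simp
  rw [hfac2]
  exact Matrix.rank_mul_le_left _ _

end Tensor

lemma frobT_nonneg {d₁ d₂ d₃ : ℕ} (X : Fin d₁ → Fin d₂ → Fin d₃ → ℝ) : 0 ≤ frobT X :=
  Real.sqrt_nonneg _

end Aux
theorem stmt5 {d₁ d₂ d₃ : ℕ} (r₀ r₁ r₂ : ℕ) (h12 : r₁ < r₂) (h20 : r₂ < r₀)
    (Z Y : Fin d₁ → Fin d₂ → Fin d₃ → ℝ)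
    (hZ : memTheta3 Z r₀) (hY : memTheta3 Y r₁)
    -- successive approximate projections:
    (W₁ W₂ W₃ : Fin d₁ → Fin d₂ → Fin d₃ → ℝ)
    (hW₁rank : (mat1 W₁).rank ≤ r₂)
    (hW₁best : ∀ M : Matrix (Fin d₁) (Fin d₂ × Fin d₃) ℝ, M.rank ≤ r₂ →
      frobM (mat1 Z - mat1 W₁) ≤ frobM (mat1 Z - M))
    (hW₂rank : (mat2 W₂).rank ≤ r₂)
    (hW₂best : ∀ M : Matrix (Fin d₂) (Fin d₁ × Fin d₃) ℝ, M.rank ≤ r₂ →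
      frobM (mat2 W₁ - mat2 W₂) ≤ frobM (mat2 W₁ - M))
    (hW₃rank : (mat3 W₃).rank ≤ r₂)
    (hW₃best : ∀ M : Matrix (Fin d₃) (Fin d₁ × Fin d₂) ℝ, M.rank ≤ r₂ →
      frobM (mat3 W₂ - mat3 W₃) ≤ frobM (mat3 W₂ - M)) :
    frobT (W₃ - Z) ≤
      (3 * Real.sqrt (((r₀ - r₂ : ℕ) : ℝ) / ((r₀ - r₁ : ℕ) : ℝ)) +
        3 * Real.sqrt (((r₀ - r₂ : ℕ) : ℝ) / ((r₀ - r₁ : ℕ) : ℝ)) ^ 2 +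
        Real.sqrt (((r₀ - r₂ : ℕ) : ℝ) / ((r₀ - r₁ : ℕ) : ℝ)) ^ 3) *
        frobT (Y - Z) := by
  classical
  set β := Real.sqrt (((r₀ - r₂ : ℕ) : ℝ) / ((r₀ - r₁ : ℕ) : ℝ)) with hβ
  have hβ0 : 0 ≤ β := Real.sqrt_nonneg _
  set D := frobT (Y - Z) with hD
  have hD0 : 0 ≤ D := Aux.frobT_nonneg _
  -- step 1
  have c₁ : frobT (Z - W₁) ≤ β * frobT (Z - Y) := by
    have h := Aux.core r₀ r₁ r₂ h12 h20 (mat1 Z) (mat1 Y) (mat1 W₁) hZ.1 hY.1 hW₁best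
    rwa [← Aux.mat1_sub, ← Aux.mat1_sub, ← Aux.frobT_eq_mat1, ← Aux.frobT_eq_mat1] at h
  -- structure of W₁
  obtain ⟨P, hP⟩ := Aux.minimizer_factor r₂ (mat1 Z) (mat1 W₁) hW₁rank hW₁best
  have hW₁mat2 : (mat2 W₁).rank ≤ r₀ := (Aux.rank_mat2_le P hP).trans hZ.2.1
  have hW₁mat3 : (mat3 W₁).rank ≤ (mat3 Z).rank := Aux.rank_mat3_le_of_mat1 P hP
  -- step 2
  have c₂ : frobT (W₁ - W₂) ≤ β * frobT (W₁ - Y) := by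
    have h := Aux.core r₀ r₁ r₂ h12 h20 (mat2 W₁) (mat2 Y) (mat2 W₂) hW₁mat2 hY.2.1 hW₂best
    rwa [← Aux.mat2_sub, ← Aux.mat2_sub, ← Aux.frobT_eq_mat2, ← Aux.frobT_eq_mat2] at h
  -- structure of W₂
  obtain ⟨Q, hQ⟩ := Aux.minimizer_factor r₂ (mat2 W₁) (mat2 W₂) hW₂rank hW₂best
  have hW₂mat3 : (mat3 W₂).rank ≤ r₀ :=
    (Aux.rank_mat3_le_of_mat2 Q hQ).trans (hW₁mat3.trans hZ.2.2)
  -- step 3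
  have c₃ : frobT (W₂ - W₃) ≤ β * frobT (W₂ - Y) := by
    have h := Aux.core r₀ r₁ r₂ h12 h20 (mat3 W₂) (mat3 Y) (mat3 W₃) hW₂mat3 hY.2.2 hW₃best
    rwa [← Aux.mat3_sub, ← Aux.mat3_sub, ← Aux.frobT_eq_mat3, ← Aux.frobT_eq_mat3] at h
  -- assemble with triangle inequalities
  set a := frobT (Z - W₁) with ha
  set b := frobT (W₁ - W₂) with hb
  set c := frobT (W₂ - W₃) with hc
  have ha0 : 0 ≤ a := Aux.frobT_nonneg _
  have hb0 : 0 ≤ b := Aux.frobT_nonneg _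
  have hc0 : 0 ≤ c := Aux.frobT_nonneg _
  have hZY : frobT (Z - Y) = D := Aux.frobT_symm Z Y
  have h1 : a ≤ β * D := by rw [← hZY]; exact c₁
  have hW₁Y : frobT (W₁ - Y) ≤ a + D := by
    have := Aux.frobT_triangle W₁ Z Y
    rw [Aux.frobT_symm W₁ Z] at this
    rw [hZY] at this
    exact this.trans (by exact le_of_eq rfl)
  have h2 : b ≤ β * (a + D) := c₂.trans (mul_le_mul_of_nonneg_left hW₁Y hβ0)
  have hW₂Y : frobT (W₂ - Y) ≤ b + a + D := by
    have t1 := Aux.frobT_triangle W₂ W₁ Y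
    have t2 : frobT (W₂ - W₁) = b := Aux.frobT_symm W₂ W₁
    linarith [hW₁Y]
  have h3 : c ≤ β * (b + a + D) := c₃.trans (mul_le_mul_of_nonneg_left hW₂Y hβ0)
  have htot : frobT (W₃ - Z) ≤ c + b + a := by
    have t1 := Aux.frobT_triangle W₃ W₂ Z
    have t2 := Aux.frobT_triangle W₂ W₁ Z
    have e1 : frobT (W₃ - W₂) = c := Aux.frobT_symm W₃ W₂
    have e2 : frobT (W₂ - W₁) = b := Aux.frobT_symm W₂ W₁
    have e3 : frobT (W₁ - Z) = a := Aux.frobT_symm W₁ Z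
    linarith
  have hfin : c + b + a ≤ (3 * β + 3 * β ^ 2 + β ^ 3) * D := by nlinarith
  linarith
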